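/- arXiv:2012.09754 — 5 statements merged into one kernel-verified Lean document; each statement's English description precedes it below -/
import Mathlib

section
/- Let U ⊆ ℝ² be open, let f, g: U → ℝ be C¹, and let h: U → ℝ be C¹ with compact support contained in U. Then ∫_U (∇_f g)·h dμ = ∫_U g·h·∂_z f dμ − ∫_U g·(∇_f h) dμ. -/
open MeasureTheory Set

/-- Partial derivative in the `x` (first) direction. -/
noncomputable def pdx (g : ℝ × ℝ → ℝ) (p : ℝ × ℝ) : ℝ := fderiv ℝ g p (1, 0)

/-- Partial derivative in the `z` (second) direction. -/
noncomputable def pdz (g : ℝ × ℝ → ℝ) (p : ℝ × ℝ) : ℝ := fderiv ℝ g p (0, 1)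

/-- The intrinsic gradient operator `∇_f g = ∂_x g − f·∂_z g`. -/
noncomputable def igrad (f g : ℝ × ℝ → ℝ) (p : ℝ × ℝ) : ℝ := pdx g p - f p * pdz g p

lemma my_div_zero (A B : ℝ × ℝ → ℝ) (hA : ContDiff ℝ 1 A) (hB : ContDiff ℝ 1 B)
    (hAs : HasCompactSupport A) (hBs : HasCompactSupport B) :
    ∫ p : ℝ × ℝ, (fderiv ℝ A p (1, 0) + fderiv ℝ B p (0, 1)) = 0 := by
  have hK : IsCompact (tsupport A ∪ tsupport B) := hAs.union hBs
  obtain ⟨r, hr0, hr⟩ := hK.isBounded.subset_closedBall_lt 0 0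
  set a : ℝ × ℝ := (-(r+1), -(r+1)) with ha
  set b : ℝ × ℝ := (r+1, r+1) with hb
  have hle : a ≤ b := by
    constructor <;> simp [ha, hb] <;> linarith
  have hball : Metric.closedBall (0 : ℝ × ℝ) r ⊆ Icc a b := by
    intro p hp
    rw [Metric.mem_closedBall, dist_zero_right] at hp
    have h1 : |p.1| ≤ r := le_trans (by simpa using norm_fst_le p) hp
    have h2 : |p.2| ≤ r := le_trans (by simpa using norm_snd_le p) hp
    rw [abs_le] at h1 h2
    constructor <;> constructor <;> simp [ha, hb] <;> linarith
  have hoff : ∀ p : ℝ × ℝ, p ∉ Icc a b →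
      fderiv ℝ A p (1,0) + fderiv ℝ B p (0,1) = 0 := by
    intro p hp
    have hpK : p ∉ tsupport A ∪ tsupport B := fun hm => hp (hball (hr hm))
    have h1 : fderiv ℝ A p = 0 := by
      by_contra hne
      exact hpK (Or.inl (support_fderiv_subset ℝ (Function.mem_support.mpr hne)))
    have h2 : fderiv ℝ B p = 0 := by
      by_contra hne
      exact hpK (Or.inr (support_fderiv_subset ℝ (Function.mem_support.mpr hne)))
    simp [h1, h2]
  have hbd : ∀ p : ℝ × ℝ, ¬ (‖p‖ ≤ r) → A p = 0 ∧ B p = 0 := by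
    intro p hp
    have hpK : p ∉ tsupport A ∪ tsupport B := by
      intro hm
      exact hp (by simpa [dist_zero_right] using Metric.mem_closedBall.mp (hr hm))
    exact ⟨image_eq_zero_of_notMem_tsupport (fun hs => hpK (Or.inl hs)),
      image_eq_zero_of_notMem_tsupport (fun hs => hpK (Or.inr hs))⟩
  have hnormfst : ∀ (x y : ℝ), ¬ (‖((x : ℝ), (y : ℝ))‖ ≤ r) ∨ True := fun _ _ => Or.inr trivial
  have key := integral_divergence_prod_Icc_of_hasFDerivAt_off_countable_of_le A B
    (fun p => fderiv ℝ A p) (fun p => fderiv ℝ B p) a b hle ∅ countable_empty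
    (hA.continuous.continuousOn) (hB.continuous.continuousOn)
    (fun x _ => ((hA.differentiable one_ne_zero) x).hasFDerivAt)
    (fun x _ => ((hB.differentiable one_ne_zero) x).hasFDerivAt)
    (by
      apply ContinuousOn.integrableOn_compact isCompact_Icc
      exact (((hA.continuous_fderiv one_ne_zero).clm_apply continuous_const).add
        ((hB.continuous_fderiv one_ne_zero).clm_apply continuous_const)).continuousOn)
  have hbig : ∀ y : ℝ, ¬ (‖((r+1 : ℝ), y)‖ ≤ r) := by
    intro y hy
    have := le_trans (by simpa only [Real.norm_eq_abs] using norm_fst_le ((r+1 : ℝ), y)) hy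
    rw [abs_le] at this; linarith [this.2]
  have hbig' : ∀ y : ℝ, ¬ (‖((-(r+1) : ℝ), y)‖ ≤ r) := by
    intro y hy
    have := le_trans (by simpa only [Real.norm_eq_abs] using norm_fst_le ((-(r+1) : ℝ), y)) hy
    rw [abs_le] at this; linarith [this.1]
  have hbig2 : ∀ x : ℝ, ¬ (‖((x : ℝ), (r+1:ℝ))‖ ≤ r) := by
    intro x hx
    have := le_trans (by simpa only [Real.norm_eq_abs] using norm_snd_le ((x : ℝ), (r+1:ℝ))) hx
    rw [abs_le] at this; linarith [this.2]
  have hbig2' : ∀ x : ℝ, ¬ (‖((x : ℝ), (-(r+1):ℝ))‖ ≤ r) := by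
    intro x hx
    have := le_trans (by simpa only [Real.norm_eq_abs] using norm_snd_le ((x : ℝ), (-(r+1):ℝ))) hx
    rw [abs_le] at this; linarith [this.1]
  rw [← setIntegral_eq_integral_of_forall_compl_eq_zero hoff, key]
  have e1 : ∀ x : ℝ, B (x, b.2) = 0 := fun x => (hbd _ (by simpa [hb] using hbig2 x)).2
  have e2 : ∀ x : ℝ, B (x, a.2) = 0 := fun x => (hbd _ (by simpa [ha] using hbig2' x)).2
  have e3 : ∀ y : ℝ, A (b.1, y) = 0 := fun y => (hbd _ (by simpa [hb] using hbig y)).1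
  have e4 : ∀ y : ℝ, A (a.1, y) = 0 := fun y => (hbd _ (by simpa [ha] using hbig' y)).1
  have e2' : ∀ x : ℝ, B (x, -1 + -r) = 0 := fun x => by
    rw [show (-1 + -r : ℝ) = -(r+1) by ring]; exact e2 x
  have e4' : ∀ y : ℝ, A (-1 + -r, y) = 0 := fun y => by
    rw [show (-1 + -r : ℝ) = -(r+1) by ring]; exact e4 y
  simp [e1, e2, e3, e4, e2', e4']

/-- integration by parts for the intrinsic gradient:
`∫_U (∇_f g)·h dμ = ∫_U g·h·∂_z f dμ − ∫_U g·(∇_f h) dμ`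
for `f, g` C¹ on an open set `U` and `h` C¹ with compact support in `U`. -/
theorem stmt2 (U : Set (ℝ × ℝ)) (hU : IsOpen U) (f g h : ℝ × ℝ → ℝ)
    (hf : ContDiffOn ℝ 1 f U) (hg : ContDiffOn ℝ 1 g U) (hh : ContDiff ℝ 1 h)
    (hhs : HasCompactSupport h) (hhU : tsupport h ⊆ U) :
    ∫ p in U, igrad f g p * h p
      = (∫ p in U, g p * h p * pdz f p) - ∫ p in U, g p * igrad f h p := by
  set K := tsupport h with hKdef
  have hKc : IsCompact K := hhs
  set A : ℝ × ℝ → ℝ := fun p => g p * h p with hAdef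
  set B : ℝ × ℝ → ℝ := fun p => -(f p * (g p * h p)) with hBdef
  have hsuppA : Function.support A ⊆ K := fun p hp =>
    subset_tsupport h (fun h0 => hp (by simp [hAdef, h0]))
  have hsuppB : Function.support B ⊆ K := fun p hp =>
    subset_tsupport h (fun h0 => hp (by simp [hBdef, h0]))
  have htsA : tsupport A ⊆ K := closure_minimal hsuppA (isClosed_tsupport h)
  have htsB : tsupport B ⊆ K := closure_minimal hsuppB (isClosed_tsupport h)
  have hAs : HasCompactSupport A := hKc.of_isClosed_subset (isClosed_tsupport A) htsA
  have hBs : HasCompactSupport B := hKc.of_isClosed_subset (isClosed_tsupport B) htsB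
  have hzero_nbhd : ∀ p : ℝ × ℝ, p ∉ U → ContDiffAt ℝ 1 A p ∧ ContDiffAt ℝ 1 B p := by
    intro p hp
    have hmem : Kᶜ ∈ nhds p :=
      (isClosed_tsupport h).isOpen_compl.mem_nhds (fun hm => hp (hhU hm))
    constructor
    · exact (contDiffAt_const (c := (0:ℝ))).congr_of_eventuallyEq
        (Filter.eventually_of_mem hmem (fun q hq => by
          simp [hAdef, image_eq_zero_of_notMem_tsupport hq]))
    · exact (contDiffAt_const (c := (0:ℝ))).congr_of_eventuallyEq
        (Filter.eventually_of_mem hmem (fun q hq => by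
          simp [hBdef, image_eq_zero_of_notMem_tsupport hq]))
  have hAc : ContDiff ℝ 1 A := by
    rw [contDiff_iff_contDiffAt]
    intro p
    by_cases hp : p ∈ U
    · exact (hg.contDiffAt (hU.mem_nhds hp)).mul hh.contDiffAt
    · exact (hzero_nbhd p hp).1
  have hBc : ContDiff ℝ 1 B := by
    rw [contDiff_iff_contDiffAt]
    intro p
    by_cases hp : p ∈ U
    · exact ((hf.contDiffAt (hU.mem_nhds hp)).mul
        ((hg.contDiffAt (hU.mem_nhds hp)).mul hh.contDiffAt)).neg
    · exact (hzero_nbhd p hp).2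
  -- pointwise identity on U
  have hpt : ∀ p ∈ U, igrad f g p * h p - (g p * h p * pdz f p - g p * igrad f h p)
      = fderiv ℝ A p (1, 0) + fderiv ℝ B p (0, 1) := by
    intro p hp
    have hfd : DifferentiableAt ℝ f p :=
      (hf.contDiffAt (hU.mem_nhds hp)).differentiableAt one_ne_zero
    have hgd : DifferentiableAt ℝ g p :=
      (hg.contDiffAt (hU.mem_nhds hp)).differentiableAt one_ne_zero
    have hhd : DifferentiableAt ℝ h p := (hh.differentiable one_ne_zero) p
    have dA : fderiv ℝ A p = g p • fderiv ℝ h p + h p • fderiv ℝ g p := fderiv_mul hgd hhd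
    have dB : fderiv ℝ B p
        = -(f p • (g p • fderiv ℝ h p + h p • fderiv ℝ g p) + (g p * h p) • fderiv ℝ f p) := by
      have : fderiv ℝ (fun q => f q * (g q * h q)) p
          = f p • fderiv ℝ (fun q => g q * h q) p + (g p * h p) • fderiv ℝ f p :=
        fderiv_mul hfd (hgd.mul hhd)
      rw [hBdef]
      rw [fderiv_fun_neg, this, ← hAdef, dA]
    simp only [igrad, pdx, pdz, dA, dB, ContinuousLinearMap.add_apply,
      ContinuousLinearMap.smul_apply, ContinuousLinearMap.neg_apply, smul_eq_mul]
    ring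
  -- integrability helper
  have hint : ∀ φ : ℝ × ℝ → ℝ, ContinuousOn φ U → (∀ p, p ∉ K → φ p = 0) →
      IntegrableOn φ U volume := by
    intro φ hφc hφ0
    have h1 : IntegrableOn φ K volume := (hφc.mono hhU).integrableOn_compact hKc
    have h2 : Integrable φ volume :=
      (integrableOn_iff_integrable_of_support_subset
        (fun p hp => by_contra fun hn => hp (hφ0 p hn))).mp h1
    exact h2.integrableOn
  have hdfU : ContinuousOn (fun p => fderiv ℝ f p) U := hf.continuousOn_fderiv_of_isOpen hU le_rfl
  have hdgU : ContinuousOn (fun p => fderiv ℝ g p) U := hg.continuousOn_fderiv_of_isOpen hU le_rfl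
  have hdh : Continuous (fun p => fderiv ℝ h p) := hh.continuous_fderiv one_ne_zero
  have hfU : ContinuousOn f U := hf.continuousOn
  have hgU : ContinuousOn g U := hg.continuousOn
  have hhC : Continuous h := hh.continuous
  have higradg : ContinuousOn (fun p => igrad f g p) U := by
    simp only [igrad, pdx, pdz]
    exact (hdgU.clm_apply continuousOn_const).sub
      (hfU.mul (hdgU.clm_apply continuousOn_const))
  have higradh : ContinuousOn (fun p => igrad f h p) U := by
    simp only [igrad, pdx, pdz]
    exact ((hdh.continuousOn).clm_apply continuousOn_const).sub
      (hfU.mul ((hdh.continuousOn).clm_apply continuousOn_const))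
  have hpdzf : ContinuousOn (fun p => pdz f p) U := by
    simp only [pdz]; exact hdfU.clm_apply continuousOn_const
  have I1 : IntegrableOn (fun p => igrad f g p * h p) U volume :=
    hint _ (higradg.mul hhC.continuousOn)
      (fun p hp => by
        have h0 : h p = 0 := image_eq_zero_of_notMem_tsupport hp
        simp [h0])
  have I2 : IntegrableOn (fun p => g p * h p * pdz f p) U volume :=
    hint _ ((hgU.mul hhC.continuousOn).mul hpdzf)
      (fun p hp => by
        have h0 : h p = 0 := image_eq_zero_of_notMem_tsupport hp
        simp [h0])
  have I3 : IntegrableOn (fun p => g p * igrad f h p) U volume := by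
    apply hint _ (hgU.mul higradh)
    intro p hp
    have hmem : Kᶜ ∈ nhds p := (isClosed_tsupport h).isOpen_compl.mem_nhds hp
    have hd0 : fderiv ℝ h p = 0 := by
      by_contra hne
      exact hp (support_fderiv_subset ℝ (Function.mem_support.mpr hne))
    simp [igrad, pdx, pdz, hd0]
  have I4 : IntegrableOn (fun p => fderiv ℝ A p (1, 0) + fderiv ℝ B p (0, 1)) U volume := by
    apply hint _ ((((hAc.continuous_fderiv one_ne_zero).clm_apply continuous_const).add
      ((hBc.continuous_fderiv one_ne_zero).clm_apply continuous_const)).continuousOn)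
    intro p hp
    have hA0 : fderiv ℝ A p = 0 := by
      by_contra hne
      exact hp (htsA (support_fderiv_subset ℝ (Function.mem_support.mpr hne)))
    have hB0 : fderiv ℝ B p = 0 := by
      by_contra hne
      exact hp (htsB (support_fderiv_subset ℝ (Function.mem_support.mpr hne)))
    simp [hA0, hB0]
  have hzero : ∫ p in U, (fderiv ℝ A p (1, 0) + fderiv ℝ B p (0, 1)) = 0 := by
    rw [setIntegral_eq_integral_of_forall_compl_eq_zero (fun p hp => by
      have hpK : p ∉ K := fun hm => hp (hhU hm)
      have hA0 : fderiv ℝ A p = 0 := by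
        by_contra hne
        exact hpK (htsA (support_fderiv_subset ℝ (Function.mem_support.mpr hne)))
      have hB0 : fderiv ℝ B p = 0 := by
        by_contra hne
        exact hpK (htsB (support_fderiv_subset ℝ (Function.mem_support.mpr hne)))
      simp [hA0, hB0])]
    exact my_div_zero A B hAc hBc hAs hBs
  have hcongr : ∫ p in U, (igrad f g p * h p - (g p * h p * pdz f p - g p * igrad f h p))
      = ∫ p in U, (fderiv ℝ A p (1, 0) + fderiv ℝ B p (0, 1)) :=
    setIntegral_congr_fun hU.measurableSet (fun p hp => hpt p hp)
  have hsplit : ∫ p in U, (igrad f g p * h p - (g p * h p * pdz f p - g p * igrad f h p))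
      = (∫ p in U, igrad f g p * h p)
        - ((∫ p in U, g p * h p * pdz f p) - ∫ p in U, g p * igrad f h p) := by
    have I23 : IntegrableOn (fun p => g p * h p * pdz f p - g p * igrad f h p) U volume :=
      I2.sub I3
    rw [integral_sub I1 I23, integral_sub I2 I3]
  have := hsplit.symm.trans (hcongr.trans hzero)
  linarith
end

section
/- Let b ∈ ℝ and let f: ℝ² → ℝ be C¹. Define f̂: ℝ² → ℝ by f̂(x,z) = f(x, z + b·x²/2) + b·x. Then the shear automorphism P_b: ℝ³ → ℝ³, P_b(x,y,z) = (x, y + bx, z), maps the intrinsic graph Γ_f bijectively onto Γ_{f̂}, and for every (x,z) ∈ ℝ², ∇_{f̂} f̂(x,z) = ∇_f f(x, z + b·x²/2) + b. -/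
open MeasureTheory Set

/-- The point of the intrinsic graph of `f` over `(x,z) ∈ V₀`. -/
noncomputable def graphPt (f : ℝ × ℝ → ℝ) (p : ℝ × ℝ) : ℝ × ℝ × ℝ :=
  (p.1, f p, p.2 + p.1 * f p / 2)

/-- The intrinsic graph `Γ_f ⊆ ℍ = ℝ³`. -/
noncomputable def Gamma (f : ℝ × ℝ → ℝ) : Set (ℝ × ℝ × ℝ) := Set.range (graphPt f)

/-- The shear automorphism `P_b(x,y,z) = (x, y + bx, z)` of the Heisenberg group. -/
def shear (b : ℝ) (q : ℝ × ℝ × ℝ) : ℝ × ℝ × ℝ := (q.1, q.2.1 + b * q.1, q.2.2)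

/-- the shear automorphism `P_b` maps `Γ_f` bijectively onto `Γ_f̂`, where
`f̂(x,z) = f(x, z + b·x²/2) + b·x`, and `∇_f̂ f̂(x,z) = ∇_f f(x, z + b·x²/2) + b`. -/
theorem stmt4 (b : ℝ) (f : ℝ × ℝ → ℝ) (hf : ContDiff ℝ 1 f)
    (fhat : ℝ × ℝ → ℝ)
    (hfhat : ∀ x z : ℝ, fhat (x, z) = f (x, z + b * x ^ 2 / 2) + b * x) :
    Set.BijOn (shear b) (Gamma f) (Gamma fhat) ∧
      ∀ x z : ℝ, igrad fhat fhat (x, z) = igrad f f (x, z + b * x ^ 2 / 2) + b := by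
  have hfe : fhat = fun p : ℝ × ℝ => f (p.1, p.2 + b * p.1 ^ 2 / 2) + b * p.1 := by
    funext p
    exact hfhat p.1 p.2
  constructor
  · refine ⟨?_, ?_, ?_⟩
    · rintro q ⟨p, rfl⟩
      refine ⟨(p.1, p.2 - b * p.1 ^ 2 / 2), ?_⟩
      have h1 : p.2 - b * p.1 ^ 2 / 2 + b * p.1 ^ 2 / 2 = p.2 := by ring
      simp only [graphPt, shear, hfhat, h1]
      refine Prod.ext rfl (Prod.ext rfl ?_)
      simp only []
      ring
    · intro p _ q _ h
      simp only [shear, Prod.ext_iff] at h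
      obtain ⟨h1, h2, h3⟩ := h
      rw [h1] at h2
      have : p.2.1 = q.2.1 := by linarith
      exact Prod.ext h1 (Prod.ext this h3)
    · rintro q ⟨p, rfl⟩
      refine ⟨graphPt f (p.1, p.2 + b * p.1 ^ 2 / 2), ⟨_, rfl⟩, ?_⟩
      simp only [graphPt, shear, hfhat]
      refine Prod.ext rfl (Prod.ext rfl ?_)
      simp only []
      ring
  · intro x z
    set φ : ℝ × ℝ := (x, z + b * x ^ 2 / 2) with hφ
    set F := fderiv ℝ f φ with hF
    -- derivative of the substitution map at (x,z)
    have hx2 : HasFDerivAt (fun q : ℝ × ℝ => b * q.1 ^ 2 / 2)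
        ((b * x) • ContinuousLinearMap.fst ℝ ℝ ℝ) (x, z) := by
      have hfst : HasFDerivAt (fun q : ℝ × ℝ => q.1) (ContinuousLinearMap.fst ℝ ℝ ℝ)
          ((x, z) : ℝ × ℝ) := hasFDerivAt_fst
      have h := (hfst.mul hfst).const_mul (b / 2)
      have he : (fun q : ℝ × ℝ => b * q.1 ^ 2 / 2) = fun q : ℝ × ℝ => b / 2 * (q.1 * q.1) := by
        funext q; ring
      rw [he]
      have heq : (b / 2) • (((x, z) : ℝ × ℝ).1 • ContinuousLinearMap.fst ℝ ℝ ℝ +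
          ((x, z) : ℝ × ℝ).1 • ContinuousLinearMap.fst ℝ ℝ ℝ)
          = (b * x) • ContinuousLinearMap.fst ℝ ℝ ℝ := by
        refine ContinuousLinearMap.ext fun v => ?_
        simp [ContinuousLinearMap.smul_apply, smul_eq_mul]
        ring
      rw [heq] at h
      exact h
    have hz : HasFDerivAt (fun q : ℝ × ℝ => q.2)
        (ContinuousLinearMap.snd ℝ ℝ ℝ) ((x, z) : ℝ × ℝ) := hasFDerivAt_snd
    have hg : HasFDerivAt (fun q : ℝ × ℝ => ((q.1, q.2 + b * q.1 ^ 2 / 2) : ℝ × ℝ))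
        ((ContinuousLinearMap.fst ℝ ℝ ℝ).prod
          (ContinuousLinearMap.snd ℝ ℝ ℝ + (b * x) • ContinuousLinearMap.fst ℝ ℝ ℝ)) (x, z) :=
      HasFDerivAt.prodMk hasFDerivAt_fst (hz.add hx2)
    have hFd : HasFDerivAt f F φ := (hf.differentiable one_ne_zero).differentiableAt.hasFDerivAt
    have hcomp : HasFDerivAt (fun q : ℝ × ℝ => f (q.1, q.2 + b * q.1 ^ 2 / 2))
        (F.comp ((ContinuousLinearMap.fst ℝ ℝ ℝ).prod
          (ContinuousLinearMap.snd ℝ ℝ ℝ + (b * x) • ContinuousLinearMap.fst ℝ ℝ ℝ))) (x, z) :=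
      hFd.comp (x, z) hg
    have hlin : HasFDerivAt (fun q : ℝ × ℝ => b * q.1)
        (b • ContinuousLinearMap.fst ℝ ℝ ℝ) ((x, z) : ℝ × ℝ) :=
      (hasFDerivAt_fst).const_mul b
    have hfull : HasFDerivAt fhat
        (F.comp ((ContinuousLinearMap.fst ℝ ℝ ℝ).prod
          (ContinuousLinearMap.snd ℝ ℝ ℝ + (b * x) • ContinuousLinearMap.fst ℝ ℝ ℝ))
          + b • ContinuousLinearMap.fst ℝ ℝ ℝ) (x, z) := by
      rw [hfe]
      exact hcomp.add hlin
    have hfd := hfull.fderiv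
    have hsplit : F (1, b * x) = F (1, 0) + b * x * F (0, 1) := by
      have : ((1 : ℝ), b * x) = ((1 : ℝ), (0 : ℝ)) + (b * x) • ((0 : ℝ), (1 : ℝ)) := by
        simp
      rw [this, map_add, ContinuousLinearMap.map_smul, smul_eq_mul]
    simp only [igrad, pdx, pdz, hfd]
    simp only [ContinuousLinearMap.add_apply, ContinuousLinearMap.comp_apply,
      ContinuousLinearMap.prod_apply, ContinuousLinearMap.smul_apply,
      ContinuousLinearMap.coe_fst', ContinuousLinearMap.coe_snd', smul_eq_mul]
    rw [hfhat x z]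
    norm_num
    rw [hsplit]
    ring
end

section
/- Let a > 0 and define f_a: ℝ² → ℝ by f_a(x,z) = −a·sign(z)·√|z| (with sign(0)=0). Then the intrinsic graph Γ_{f_a} is exactly the union of the pairs of horizontal rays of slope ±a²/2 emanating forward from the points of the x-axis: Γ_{f_a} = { (t + s, ε·(a²/2)·s, ε·(a²/4)·t·s) : t ∈ ℝ, s ∈ [0,∞), ε ∈ {1, −1} }, where for each t and ε the curve s ↦ (t,0,0)·(s, ε·(a²/2)·s, 0) (Heisenberg product) is a horizontal ray of slope ε·a²/2. -/
open MeasureTheory Set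

/-- The herringbone function `f_a(x,z) = −a·sign(z)·√|z|`. -/
noncomputable def herringbone (a : ℝ) (p : ℝ × ℝ) : ℝ :=
  -a * Real.sign p.2 * Real.sqrt |p.2|

/-- for `a > 0`, the intrinsic graph of `f_a(x,z) = −a·sign(z)·√|z|` is the
union of the pairs of horizontal rays of slope `±a²/2` emanating forward from points of
the `x`-axis: `Γ_{f_a} = {(t+s, ε·(a²/2)·s, ε·(a²/4)·t·s) : t ∈ ℝ, s ≥ 0, ε = ±1}`. -/
theorem stmt9 (a : ℝ) (ha : 0 < a) :
    Gamma (herringbone a)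
      = {q : ℝ × ℝ × ℝ | ∃ t s ε : ℝ, 0 ≤ s ∧ (ε = 1 ∨ ε = -1) ∧
          q = (t + s, ε * (a ^ 2 / 2) * s, ε * (a ^ 2 / 4) * (t * s))} := by
  have ha' : a ≠ 0 := ne_of_gt ha
  ext q
  constructor
  · rintro ⟨⟨x, z⟩, rfl⟩
    simp only [graphPt, herringbone, Set.mem_setOf_eq]
    rcases lt_trichotomy z 0 with hz | hz | hz
    · -- z < 0 : sign = -1, f = a√(-z)
      set r := Real.sqrt |z| with hr
      have hr0 : 0 ≤ r := Real.sqrt_nonneg _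
      have hr2 : r ^ 2 = -z := by
        rw [hr, Real.sq_sqrt (abs_nonneg z), abs_of_neg hz]
      refine ⟨x - 2 * r / a, 2 * r / a, 1, by positivity, Or.inl rfl, ?_⟩
      rw [Real.sign_of_neg hz]
      refine Prod.ext (by ring) (Prod.ext ?_ ?_) <;> simp only <;>
        field_simp <;> nlinarith [hr2]
    · subst hz
      exact ⟨x, 0, 1, le_refl 0, Or.inl rfl, by
        simp [Real.sign_zero]⟩
    · -- z > 0 : sign = 1, f = -a√z
      set r := Real.sqrt |z| with hr
      have hr0 : 0 ≤ r := Real.sqrt_nonneg _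
      have hr2 : r ^ 2 = z := by
        rw [hr, Real.sq_sqrt (abs_nonneg z), abs_of_pos hz]
      refine ⟨x - 2 * r / a, 2 * r / a, -1, by positivity, Or.inr rfl, ?_⟩
      rw [Real.sign_of_pos hz]
      refine Prod.ext (by ring) (Prod.ext ?_ ?_) <;> simp only <;>
        field_simp <;> nlinarith [hr2]
  · rintro ⟨t, s, ε, hs, hε, rfl⟩
    refine ⟨(t + s, -ε * (a ^ 2 / 4) * s ^ 2), ?_⟩
    have hsq : Real.sqrt (a ^ 2 / 4 * s ^ 2) = a * s / 2 := by
      rw [show a ^ 2 / 4 * s ^ 2 = (a * s / 2) ^ 2 by ring,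
        Real.sqrt_sq (by positivity)]
    rcases eq_or_lt_of_le hs with hs0 | hs0
    · subst hs0
      simp [graphPt, herringbone, Real.sign_zero]
    · rcases hε with rfl | rfl
      · have hzneg : (-(1:ℝ) * (a ^ 2 / 4) * s ^ 2) < 0 := by nlinarith [mul_pos (pow_pos ha 2) (pow_pos hs0 2)]
        simp only [graphPt, herringbone]
        rw [Real.sign_of_neg hzneg, abs_of_neg hzneg,
          show -(-(1:ℝ) * (a ^ 2 / 4) * s ^ 2) = a ^ 2 / 4 * s ^ 2 by ring, hsq]
        refine Prod.ext rfl (Prod.ext (by ring) (by ring))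
      · have hzpos : (0:ℝ) < -(-1:ℝ) * (a ^ 2 / 4) * s ^ 2 := by nlinarith [mul_pos (pow_pos ha 2) (pow_pos hs0 2)]
        simp only [graphPt, herringbone]
        rw [Real.sign_of_pos hzpos, abs_of_pos hzpos,
          show -(-1:ℝ) * (a ^ 2 / 4) * s ^ 2 = a ^ 2 / 4 * s ^ 2 by ring, hsq]
        refine Prod.ext rfl (Prod.ext (by ring) (by ring))
end

section
/- Let a ∈ ℝ and define f_a: ℝ² → ℝ by f_a(x,z) = −a·sign(z)·√|z| (with sign(0)=0). Then f_a admits the distributional intrinsic gradient θ(x,z) = −(a²/2)·sign(z): for every C¹ function ψ: ℝ² → ℝ with compact support, ∫ (−(a²/2)·sign(z))·ψ dμ = ∫ (−f_a·∂_xψ + (f_a²/2)·∂_zψ) dμ. -/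
open MeasureTheory Set Filter Topology

/- ### Auxiliary lemmas -/

lemma measurable_realSign : Measurable Real.sign := by
  unfold Real.sign
  exact Measurable.ite (measurableSet_lt measurable_id measurable_const) measurable_const
    (Measurable.ite (measurableSet_lt measurable_const measurable_id) measurable_const
      measurable_const)

lemma abs_realSign_le_one (z : ℝ) : |Real.sign z| ≤ 1 := by
  rcases lt_trichotomy z 0 with h | h | h
  · simp [Real.sign_of_neg h]
  · simp [h]
  · simp [Real.sign_of_pos h]

lemma sign_sq_mul_abs (z : ℝ) : Real.sign z ^ 2 * |z| = |z| := by
  rcases lt_trichotomy z 0 with h | h | h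
  · simp [Real.sign_of_neg h]
  · simp [h]
  · simp [Real.sign_of_pos h]

/-- A continuous compactly supported slice is eventually zero at `atTop`/`atBot`. -/
lemma hcs_eventually_top {h : ℝ → ℝ} (hc : HasCompactSupport h) :
    ∀ᶠ z in atTop, h z = 0 := by
  obtain ⟨R, hR⟩ := hc.isBounded.subset_closedBall 0
  filter_upwards [eventually_ge_atTop (R + 1)] with z hz
  apply image_eq_zero_of_notMem_tsupport
  intro hmem
  have := hR hmem
  rw [Metric.mem_closedBall, Real.dist_eq, sub_zero] at this
  have : z ≤ R := le_trans (le_abs_self z) this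
  linarith

lemma hcs_eventually_bot {h : ℝ → ℝ} (hc : HasCompactSupport h) :
    ∀ᶠ z in atBot, h z = 0 := by
  obtain ⟨R, hR⟩ := hc.isBounded.subset_closedBall 0
  filter_upwards [eventually_le_atBot (-(R + 1))] with z hz
  apply image_eq_zero_of_notMem_tsupport
  intro hmem
  have := hR hmem
  rw [Metric.mem_closedBall, Real.dist_eq, sub_zero] at this
  have : -z ≤ R := le_trans (neg_le_abs z) this
  linarith

/-- The integral of the derivative of a `C¹` compactly supported function vanishes. -/
lemma integral_deriv_zero {h : ℝ → ℝ} (hh : ContDiff ℝ 1 h) (hc : HasCompactSupport h) :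
    ∫ x : ℝ, deriv h x = 0 := by
  have hint : Integrable (deriv h) :=
    (hh.continuous_deriv le_rfl).integrable_of_hasCompactSupport hc.deriv
  have := intervalIntegral.integral_Iic_add_Ioi (b := (0:ℝ)) hint.integrableOn hint.integrableOn
  rw [hc.integral_Iic_deriv_eq hh 0, hc.integral_Ioi_deriv_eq hh 0] at this
  linarith [this]

/-- Integration by parts against `|z|`. -/
lemma integral_abs_mul_deriv {h : ℝ → ℝ} (hh : ContDiff ℝ 1 h) (hc : HasCompactSupport h) :
    ∫ z : ℝ, |z| * deriv h z = - ∫ z : ℝ, Real.sign z * h z := by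
  have hd : ∀ z, HasDerivAt h (deriv h z) z := fun z =>
    (hh.differentiable one_ne_zero z).hasDerivAt
  have hdc : Continuous (deriv h) := hh.continuous_deriv le_rfl
  have hint_h : Integrable h := hh.continuous.integrable_of_hasCompactSupport hc
  have hint_zd : Integrable (fun z => z * deriv h z) :=
    (continuous_id.mul hdc).integrable_of_hasCompactSupport hc.deriv.mul_left
  have hint_nzd : Integrable (fun z => -z * deriv h z) :=
    ((continuous_id.neg).mul hdc).integrable_of_hasCompactSupport hc.deriv.mul_left
  have hint_ad : Integrable (fun z => |z| * deriv h z) :=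
    (continuous_abs.mul hdc).integrable_of_hasCompactSupport hc.deriv.mul_left
  have hint_sh : Integrable (fun z => Real.sign z * h z) := by
    refine (hint_h.norm.const_mul 1).mono'
      (((measurable_realSign.comp measurable_id).mul
        hh.continuous.measurable).aestronglyMeasurable) ?_
    refine Eventually.of_forall fun z => ?_
    rw [Real.norm_eq_abs, abs_mul]
    exact mul_le_mul (abs_realSign_le_one z) le_rfl (abs_nonneg _) zero_le_one
  -- tendsto facts
  have htop : Tendsto (fun z => z * h z) atTop (𝓝 0) := by
    refine tendsto_const_nhds.congr' ?_
    filter_upwards [hcs_eventually_top hc] with z hz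
    simp [hz]
  have hbot : Tendsto (fun z => -z * h z) atBot (𝓝 0) := by
    refine tendsto_const_nhds.congr' ?_
    filter_upwards [hcs_eventually_bot hc] with z hz
    simp [hz]
  have hzero_pos : Tendsto (fun z => z * h z) (𝓝[>] (0:ℝ)) (𝓝 0) := by
    have : Tendsto (fun z => z * h z) (𝓝 (0:ℝ)) (𝓝 (0 * h 0)) :=
      (continuous_id.mul hh.continuous).tendsto 0
    simpa using this.mono_left nhdsWithin_le_nhds
  have hzero_neg : Tendsto (fun z => -z * h z) (𝓝[<] (0:ℝ)) (𝓝 0) := by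
    have : Tendsto (fun z => -z * h z) (𝓝 (0:ℝ)) (𝓝 (-0 * h 0)) :=
      ((continuous_id.neg).mul hh.continuous).tendsto 0
    simpa using this.mono_left nhdsWithin_le_nhds
  -- integration by parts on (0, ∞)
  have I1 : ∫ z in Ioi (0:ℝ), z * deriv h z = (0:ℝ) - 0 - ∫ z in Ioi (0:ℝ), 1 * h z :=
    MeasureTheory.integral_Ioi_mul_deriv_eq_deriv_mul
      (u := fun z => z) (v := h) (u' := fun _ => (1:ℝ)) (v' := deriv h)
      (fun x _ => hasDerivAt_id x) (fun x _ => hd x)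
      hint_zd.integrableOn ((hint_h.const_mul 1).integrableOn) hzero_pos htop
  -- integration by parts on (-∞, 0]
  have I2 : ∫ z in Iic (0:ℝ), -z * deriv h z = (0:ℝ) - 0 - ∫ z in Iic (0:ℝ), -1 * h z :=
    MeasureTheory.integral_Iic_mul_deriv_eq_deriv_mul
      (u := fun z => -z) (v := h) (u' := fun _ => (-1:ℝ)) (v' := deriv h)
      (fun x _ => (hasDerivAt_id x).neg) (fun x _ => hd x)
      hint_nzd.integrableOn ((hint_h.const_mul (-1)).integrableOn) hzero_neg hbot
  have hz_ae : ∀ᵐ z : ℝ, z ≠ (0:ℝ) := by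
    rw [ae_iff]
    simp only [ne_eq, not_not, Set.setOf_eq_eq_singleton]
    exact measure_singleton 0
  -- rewrite |z| on the two half-lines
  have eL : ∫ z : ℝ, |z| * deriv h z
      = (∫ z in Iic (0:ℝ), -z * deriv h z) + ∫ z in Ioi (0:ℝ), z * deriv h z := by
    rw [← intervalIntegral.integral_Iic_add_Ioi (b := (0:ℝ)) hint_ad.integrableOn hint_ad.integrableOn]
    congr 1
    · refine setIntegral_congr_ae measurableSet_Iic ?_
      refine Eventually.of_forall fun z hz => ?_
      rw [abs_of_nonpos hz]
    · refine setIntegral_congr_ae measurableSet_Ioi ?_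
      refine Eventually.of_forall fun z hz => ?_
      rw [abs_of_pos hz]
  have eR : ∫ z : ℝ, Real.sign z * h z
      = (∫ z in Iic (0:ℝ), -1 * h z) + ∫ z in Ioi (0:ℝ), 1 * h z := by
    rw [← intervalIntegral.integral_Iic_add_Ioi (b := (0:ℝ)) hint_sh.integrableOn hint_sh.integrableOn]
    congr 1
    · refine setIntegral_congr_ae measurableSet_Iic ?_
      filter_upwards [hz_ae] with z hz hmem
      rw [Real.sign_of_neg (lt_of_le_of_ne hmem hz)]
    · refine setIntegral_congr_ae measurableSet_Ioi ?_
      refine Eventually.of_forall fun z hz => ?_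
      rw [Real.sign_of_pos hz]
  rw [eL, eR, I1, I2]
  ring

/-- The map `x ↦ (x, z)` is a closed embedding. -/
lemma isClosedEmbedding_mk_left (z : ℝ) :
    Topology.IsClosedEmbedding (fun x : ℝ => (x, z)) := by
  have : Isometry (fun x : ℝ => (x, z)) := by
    intro x y
    simp [Prod.edist_eq, edist_self]
  exact this.isClosedEmbedding

/-- The map `z ↦ (x, z)` is a closed embedding. -/
lemma isClosedEmbedding_mk_right (x : ℝ) :
    Topology.IsClosedEmbedding (fun z : ℝ => (x, z)) := by
  have : Isometry (fun z : ℝ => (x, z)) := by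
    intro z w
    simp [Prod.edist_eq, edist_self]
  exact this.isClosedEmbedding

/-- Generic integrability criterion: a measurable function bounded on the support of a
continuous compactly supported function, times that function, is integrable. -/
lemma integrable_mul_aux {c G : ℝ × ℝ → ℝ}
    (hmeas : AEStronglyMeasurable (fun p => c p * G p) volume)
    (hG : Continuous G) (hGc : HasCompactSupport G)
    {M : ℝ} (hM : ∀ p, G p ≠ 0 → |c p| ≤ M) :
    Integrable (fun p => c p * G p) := by
  have hGint : Integrable G := hG.integrable_of_hasCompactSupport hGc
  refine (hGint.norm.const_mul M).mono' hmeas ?_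
  refine Eventually.of_forall fun p => ?_
  by_cases h : G p = 0
  · simp [h]
  · rw [Real.norm_eq_abs, abs_mul, Real.norm_eq_abs]
    exact mul_le_mul_of_nonneg_right (hM p h) (abs_nonneg _)

/-- the herringbone function `f_a` admits the distributional intrinsic
gradient `θ(x,z) = −(a²/2)·sign(z)`. -/
theorem stmt10 (a : ℝ) :
    ∀ ψ : ℝ × ℝ → ℝ, ContDiff ℝ 1 ψ → HasCompactSupport ψ →
      ∫ p : ℝ × ℝ, (-(a ^ 2 / 2) * Real.sign p.2) * ψ p
        = ∫ p : ℝ × ℝ,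
            (-(herringbone a p) * pdx ψ p + (herringbone a p) ^ 2 / 2 * pdz ψ p) := by
  intro ψ hψ hψc
  -- the 1D profile
  set g : ℝ → ℝ := fun z => -a * Real.sign z * Real.sqrt |z| with hg_def
  have hgm : Measurable g :=
    ((measurable_realSign.const_mul (-a)).mul
      ((Real.continuous_sqrt.comp continuous_abs).measurable))
  -- continuity and support of partial derivatives
  have hfd : Continuous (fun p : ℝ × ℝ => fderiv ℝ ψ p) := hψ.continuous_fderiv one_ne_zero
  have hpdx_cont : Continuous (pdx ψ) := hfd.clm_apply continuous_const
  have hpdz_cont : Continuous (pdz ψ) := hfd.clm_apply continuous_const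
  have hpdx_cs : HasCompactSupport (pdx ψ) := hψc.fderiv_apply ℝ (1, 0)
  have hpdz_cs : HasCompactSupport (pdz ψ) := hψc.fderiv_apply ℝ (0, 1)
  -- bounding radius
  obtain ⟨R₀, hR₀⟩ := hψc.isBounded.subset_closedBall 0
  set R : ℝ := max R₀ 0 with hR_def
  have hR : tsupport ψ ⊆ Metric.closedBall 0 R :=
    hR₀.trans (Metric.closedBall_subset_closedBall (le_max_left _ _))
  have hR0 : (0:ℝ) ≤ R := le_max_right _ _
  have habs_le : ∀ p : ℝ × ℝ, p ∈ tsupport ψ → |p.2| ≤ R := by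
    intro p hp
    have h1 : ‖p‖ ≤ R := by simpa [Metric.mem_closedBall] using hR hp
    exact le_trans (norm_snd_le p) h1
  -- slices in the x-direction
  have hslx : ∀ (z x : ℝ), HasDerivAt (fun x' => ψ (x', z)) (pdx ψ (x, z)) x := by
    intro z x
    have h1 : HasDerivAt (fun x' : ℝ => (x', z)) ((1:ℝ), (0:ℝ)) x :=
      HasDerivAt.prodMk (hasDerivAt_id x) (hasDerivAt_const x z)
    exact ((hψ.differentiable one_ne_zero (x, z)).hasFDerivAt).comp_hasDerivAt x h1
  have hslx_cd : ∀ z : ℝ, ContDiff ℝ 1 (fun x' => ψ (x', z)) := fun z =>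
    hψ.comp (contDiff_id.prodMk contDiff_const)
  have hslx_cs : ∀ z : ℝ, HasCompactSupport (fun x' => ψ (x', z)) := fun z =>
    hψc.comp_isClosedEmbedding (isClosedEmbedding_mk_left z)
  -- slices in the z-direction
  have hslz : ∀ (x z : ℝ), HasDerivAt (fun z' => ψ (x, z')) (pdz ψ (x, z)) z := by
    intro x z
    have h1 : HasDerivAt (fun z' : ℝ => (x, z')) ((0:ℝ), (1:ℝ)) z :=
      HasDerivAt.prodMk (hasDerivAt_const z x) (hasDerivAt_id z)
    exact ((hψ.differentiable one_ne_zero (x, z)).hasFDerivAt).comp_hasDerivAt z h1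
  have hslz_cd : ∀ x : ℝ, ContDiff ℝ 1 (fun z' => ψ (x, z')) := fun x =>
    hψ.comp (contDiff_const.prodMk contDiff_id)
  have hslz_cs : ∀ x : ℝ, HasCompactSupport (fun z' => ψ (x, z')) := fun x =>
    hψc.comp_isClosedEmbedding (isClosedEmbedding_mk_right x)
  -- integrability of the three integrands
  have hE1 : Integrable (fun p : ℝ × ℝ => (-(a ^ 2 / 2) * Real.sign p.2) * ψ p) := by
    refine integrable_mul_aux ?_ hψ.continuous hψc (M := |a ^ 2 / 2|) ?_
    · exact (((measurable_realSign.comp measurable_snd).const_mul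
        (-(a ^ 2 / 2))).mul hψ.continuous.measurable).aestronglyMeasurable
    · intro p hp
      rw [abs_mul, abs_neg]
      calc |a ^ 2 / 2| * |Real.sign p.2| ≤ |a ^ 2 / 2| * 1 :=
        mul_le_mul_of_nonneg_left (abs_realSign_le_one _) (abs_nonneg _)
      _ = |a ^ 2 / 2| := mul_one _
  have hE2 : Integrable (fun p : ℝ × ℝ => -g p.2 * pdx ψ p) := by
    refine integrable_mul_aux ?_ hpdx_cont hpdx_cs (M := |a| * Real.sqrt R) ?_
    · exact (((hgm.comp measurable_snd).neg).mul
        hpdx_cont.measurable).aestronglyMeasurable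
    · intro p hp
      have hmem : p ∈ tsupport ψ := by
        have : p ∈ Function.support (fderiv ℝ ψ) := by
          intro h0
          apply hp
          simp [pdx, h0]
        exact support_fderiv_subset ℝ this
      have h2 : |p.2| ≤ R := habs_le p hmem
      have hs : Real.sqrt (|p.2|) ≤ Real.sqrt R := Real.sqrt_le_sqrt h2
      have hval : -g p.2 = a * Real.sign p.2 * Real.sqrt (|p.2|) := by rw [hg_def]; ring
      rw [hval, abs_mul, abs_mul, abs_of_nonneg (Real.sqrt_nonneg _)]
      have step : |a| * |Real.sign p.2| ≤ |a| := by
        nlinarith [abs_nonneg a, abs_realSign_le_one p.2, abs_nonneg (Real.sign p.2)]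
      exact mul_le_mul step hs (Real.sqrt_nonneg _) (abs_nonneg a)
  have hE3 : Integrable (fun p : ℝ × ℝ => (a ^ 2 / 2 * |p.2|) * pdz ψ p) := by
    refine integrable_mul_aux ?_ hpdz_cont hpdz_cs (M := |a ^ 2 / 2| * R) ?_
    · exact ((continuous_const.mul
        (continuous_abs.comp continuous_snd)).mul hpdz_cont).aestronglyMeasurable
    · intro p hp
      have hmem : p ∈ tsupport ψ := by
        have : p ∈ Function.support (fderiv ℝ ψ) := by
          intro h0
          apply hp
          simp [pdz, h0]
        exact support_fderiv_subset ℝ this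
      have h2 : |p.2| ≤ R := habs_le p hmem
      rw [abs_mul, abs_abs]
      exact mul_le_mul_of_nonneg_left h2 (abs_nonneg _)
  -- rewrite the RHS integrand pointwise
  have hpt : ∀ p : ℝ × ℝ, -(herringbone a p) * pdx ψ p + (herringbone a p) ^ 2 / 2 * pdz ψ p
      = -g p.2 * pdx ψ p + (a ^ 2 / 2 * |p.2|) * pdz ψ p := by
    intro p
    have hsq : (g p.2) ^ 2 = a ^ 2 * |p.2| := by
      have h1 : Real.sqrt (|p.2|) ^ 2 = |p.2| := Real.sq_sqrt (abs_nonneg _)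
      have h0 : g p.2 = -a * Real.sign p.2 * Real.sqrt (|p.2|) := rfl
      calc (g p.2) ^ 2
          = a ^ 2 * (Real.sign p.2 ^ 2 * Real.sqrt (|p.2|) ^ 2) := by
            rw [h0]; ring
        _ = a ^ 2 * (Real.sign p.2 ^ 2 * |p.2|) := by rw [h1]
        _ = a ^ 2 * |p.2| := by rw [sign_sq_mul_abs]
    have hherr : herringbone a p = g p.2 := rfl
    rw [hherr, hsq]
    ring
  rw [show (fun p : ℝ × ℝ => -(herringbone a p) * pdx ψ p
      + (herringbone a p) ^ 2 / 2 * pdz ψ p)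
      = fun p : ℝ × ℝ => -g p.2 * pdx ψ p + (a ^ 2 / 2 * |p.2|) * pdz ψ p from funext hpt]
  rw [integral_add hE2 hE3]
  -- the x-term vanishes
  have hA : ∫ p : ℝ × ℝ, -g p.2 * pdx ψ p = 0 := by
    rw [Measure.volume_eq_prod] at hE2 ⊢
    rw [MeasureTheory.integral_prod_symm _ hE2]
    have : ∀ z : ℝ, ∫ x : ℝ, -g z * pdx ψ (x, z) = 0 := by
      intro z
      rw [MeasureTheory.integral_const_mul]
      have hder : ∫ x : ℝ, pdx ψ (x, z) = ∫ x : ℝ, deriv (fun x' => ψ (x', z)) x := by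
        congr 1
        funext x
        exact ((hslx z x).deriv).symm
      rw [hder, integral_deriv_zero (hslx_cd z) (hslx_cs z), mul_zero]
    simp only [this, integral_zero]
  rw [hA, zero_add]
  -- the z-term gives the result via 1D integration by parts
  rw [Measure.volume_eq_prod] at hE1 hE3 ⊢
  rw [MeasureTheory.integral_prod _ hE1, MeasureTheory.integral_prod _ hE3]
  congr 1
  funext x
  have key := integral_abs_mul_deriv (hslz_cd x) (hslz_cs x)
  calc ∫ z : ℝ, (-(a ^ 2 / 2) * Real.sign z) * ψ (x, z)
      = ∫ z : ℝ, (-(a ^ 2 / 2)) * (Real.sign z * ψ (x, z)) := by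
        congr 1; funext z; ring
    _ = (-(a ^ 2 / 2)) * ∫ z : ℝ, Real.sign z * ψ (x, z) :=
        MeasureTheory.integral_const_mul _ _
    _ = (a ^ 2 / 2) * ∫ z : ℝ, |z| * deriv (fun z' => ψ (x, z')) z := by
        rw [key]; ring
    _ = ∫ z : ℝ, (a ^ 2 / 2) * (|z| * deriv (fun z' => ψ (x, z')) z) :=
        (MeasureTheory.integral_const_mul _ _).symm
    _ = ∫ z : ℝ, (a ^ 2 / 2 * |z|) * pdz ψ (x, z) := by
        congr 1
        funext z
        rw [(hslz x z).deriv]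
        ring
end

section
/- Let U ⊆ ℝ² be open and let f: U → ℝ be C² with ∇_f² f = 0 on U. Let I ⊆ ℝ be an interval and let γ = (γ_x, γ_z): I → U be a C¹ integral curve of the intrinsic gradient field, i.e., γ_x'(t) = 1 and γ_z'(t) = −f(γ(t)) for all t ∈ I. Then the lifted curve λ: I → ℝ³, λ(t) = ( γ_x(t), f(γ(t)), γ_z(t) + γ_x(t)·f(γ(t))/2 ), which lies in the intrinsic graph Γ_f, is an affine map: there exist p, v ∈ ℝ³ such that λ(t) = p + t·v for all t ∈ I. In particular, Γ_f contains a horizontal line segment through each point lying over U. -/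
open MeasureTheory Set

lemma clm_vec (L : ℝ × ℝ →L[ℝ] ℝ) (c : ℝ) : L (1, -c) = L (1, 0) - c * L (0, 1) := by
  have h : ((1 : ℝ), -c) = ((1 : ℝ), (0 : ℝ)) - c • ((0 : ℝ), (1 : ℝ)) := by
    simp [Prod.ext_iff]
  rw [h, map_sub, _root_.map_smul, smul_eq_mul]

lemma const_of_deriv0 {φ : ℝ → ℝ} {I : Set ℝ} (hconv : Convex ℝ I)
    (h : ∀ t ∈ I, HasDerivWithinAt φ 0 I t) {s t : ℝ} (hs : s ∈ I) (ht : t ∈ I) :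
    φ t = φ s := by
  have := hconv.norm_image_sub_le_of_norm_hasDerivWithin_le (C := 0) (f' := fun _ => (0 : ℝ))
    h (fun x _ => by simp) hs ht
  rw [zero_mul] at this
  have := le_antisymm this (norm_nonneg _)
  rwa [norm_eq_zero, sub_eq_zero] at this

/-- if `f` is C² on an open set `U` with `∇_f² f = 0` on `U`, and
`γ : I → U` is a C¹ integral curve of the intrinsic gradient field (`γ_x' = 1`,
`γ_z' = −f∘γ`) on an interval `I`, then the lifted curve
`λ(t) = (γ_x(t), f(γ(t)), γ_z(t) + γ_x(t)·f(γ(t))/2)` in the intrinsic graph `Γ_f` is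
affine: `λ(t) = p + t·v` for some `p, v ∈ ℝ³`. -/
theorem stmt14 (U : Set (ℝ × ℝ)) (hU : IsOpen U) (f : ℝ × ℝ → ℝ)
    (hf : ContDiffOn ℝ 2 f U)
    (hharm : ∀ p ∈ U, igrad f (igrad f f) p = 0)
    (I : Set ℝ) (hI : I.OrdConnected)
    (γ : ℝ → ℝ × ℝ) (hγU : ∀ t ∈ I, γ t ∈ U)
    (hγ : ∀ t ∈ I, HasDerivWithinAt γ (1, -f (γ t)) I t) :
    ∃ p v : ℝ × ℝ × ℝ, ∀ t ∈ I,
      ((γ t).1, f (γ t), (γ t).2 + (γ t).1 * f (γ t) / 2) = p + t • v := by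
  rcases I.eq_empty_or_nonempty with rfl | ⟨t0, ht0⟩
  · exact ⟨0, 0, by simp⟩
  have hconv : Convex ℝ I := convex_iff_ordConnected.mpr hI
  -- `igrad f f` is C¹ on U
  have hf1 : ContDiffOn ℝ 1 f U := hf.of_le one_le_two
  have hfd : ContDiffOn ℝ 1 (fun p => fderiv ℝ f p) U :=
    hf.fderiv_of_isOpen hU (by norm_num)
  have hG : ContDiffOn ℝ 1 (igrad f f) U := by
    have hx : ContDiffOn ℝ 1 (pdx f) U := hfd.clm_apply contDiffOn_const
    have hz : ContDiffOn ℝ 1 (pdz f) U := hfd.clm_apply contDiffOn_const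
    exact hx.sub (hf1.mul hz)
  -- derivative of f ∘ γ
  have key_g : ∀ t ∈ I, HasDerivWithinAt (fun t => f (γ t)) (igrad f f (γ t)) I t := by
    intro t ht
    have hdf : DifferentiableAt ℝ f (γ t) :=
      (hf.contDiffAt (hU.mem_nhds (hγU t ht))).differentiableAt two_ne_zero
    have := hdf.hasFDerivAt.comp_hasDerivWithinAt t (hγ t ht)
    simpa [Function.comp_def, igrad, pdx, pdz, clm_vec] using this
  -- derivative of igrad f f ∘ γ is zero
  have key_h : ∀ t ∈ I, HasDerivWithinAt (fun t => igrad f f (γ t)) 0 I t := by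
    intro t ht
    have hdG : DifferentiableAt ℝ (igrad f f) (γ t) :=
      (hG.contDiffAt (hU.mem_nhds (hγU t ht))).differentiableAt one_ne_zero
    have h1 := hdG.hasFDerivAt.comp_hasDerivWithinAt t (hγ t ht)
    have h2 : fderiv ℝ (igrad f f) (γ t) (1, -f (γ t)) = 0 := by
      rw [clm_vec]
      exact hharm (γ t) (hγU t ht)
    rw [Function.comp_def] at h1
    rwa [h2] at h1
  set c : ℝ := igrad f f (γ t0) with hc
  have hhc : ∀ t ∈ I, igrad f f (γ t) = c := fun t ht =>
    const_of_deriv0 hconv key_h ht0 ht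
  -- g is affine
  set B : ℝ := f (γ t0) - c * t0 with hB
  have g_aff : ∀ t ∈ I, f (γ t) = c * t + B := by
    intro t ht
    have hd : ∀ s ∈ I, HasDerivWithinAt (fun s => f (γ s) - c * s) 0 I s := by
      intro s hs
      have := (key_g s hs).sub ((hasDerivWithinAt_id s I).const_mul c)
      rw [hhc s hs, mul_one, sub_self] at this
      exact this
    have := const_of_deriv0 hconv hd ht0 ht
    rw [hB]; linarith
  -- γ_x derivatives
  have key_x : ∀ t ∈ I, HasDerivWithinAt (fun t => (γ t).1) 1 I t := by
    intro t ht
    have := (ContinuousLinearMap.fst ℝ ℝ ℝ).hasFDerivAt.comp_hasDerivWithinAt t (hγ t ht)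
    simpa [Function.comp_def] using this
  set A : ℝ := (γ t0).1 - t0 with hA
  have x_aff : ∀ t ∈ I, (γ t).1 = t + A := by
    intro t ht
    have hd : ∀ s ∈ I, HasDerivWithinAt (fun s => (γ s).1 - s) 0 I s := by
      intro s hs
      have h := (key_x s hs).sub (hasDerivWithinAt_id s I)
      rw [sub_self] at h
      exact h
    have := const_of_deriv0 hconv hd ht0 ht
    rw [hA]; linarith
  -- third coordinate
  set m : ℝ := (A * c - B) / 2 with hm
  have key_w : ∀ t ∈ I, HasDerivWithinAt
      (fun t => (γ t).2 + (γ t).1 * f (γ t) / 2 - m * t) 0 I t := by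
    intro t ht
    have hz : HasDerivWithinAt (fun t => (γ t).2) (-f (γ t)) I t := by
      have := (ContinuousLinearMap.snd ℝ ℝ ℝ).hasFDerivAt.comp_hasDerivWithinAt t (hγ t ht)
      simpa [Function.comp_def] using this
    have hmul : HasDerivWithinAt (fun t => (γ t).1 * f (γ t))
        (1 * f (γ t) + (γ t).1 * igrad f f (γ t)) I t :=
      (key_x t ht).mul (key_g t ht)
    have h3 := (hz.add (hmul.div_const 2)).sub ((hasDerivWithinAt_id t I).const_mul m)
    have heq : -f (γ t) + (1 * f (γ t) + (γ t).1 * igrad f f (γ t)) / 2 - m * 1 = 0 := by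
      rw [hhc t ht, g_aff t ht, x_aff t ht, hm]; ring
    rwa [heq] at h3
  set W : ℝ := (γ t0).2 + (γ t0).1 * f (γ t0) / 2 - m * t0 with hW
  have z_aff : ∀ t ∈ I, (γ t).2 + (γ t).1 * f (γ t) / 2 = m * t + W := by
    intro t ht
    have := const_of_deriv0 hconv key_w ht0 ht
    rw [hW]; linarith [this]
  refine ⟨(A, B, W), (1, c, m), fun t ht => ?_⟩
  have h1 := x_aff t ht
  have h2 := g_aff t ht
  have h3 := z_aff t ht
  simp only [Prod.mk_add_mk, Prod.smul_mk, smul_eq_mul, Prod.ext_iff]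
  refine ⟨by linarith, by linarith, by linarith⟩
end
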